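/- arXiv:2004.08813 — 2 statements merged into one kernel-verified Lean document; each statement's English description precedes it below -/
import Mathlib

section
/- Birman–Schwinger principle, direction (ii): Let k ∈ T^d, z < E_min(k), and μ > 0. If ψ ∈ ℓ²(ℤ^d) satisfies ψ = B_μ(k,z) ψ, then f := R̂_0(k,z) |V|^{1/2} ψ ∈ ℓ²(ℤ^d) satisfies H_μ(k) f = z f. -/
open MeasureTheory Complex Filter
open scoped InnerProductSpace

noncomputable section

instance : Fact (0 < 2 * Real.pi) := ⟨by positivity⟩

/-- The `d`-dimensional torus `T^d = (ℝ/2πℤ)^d`. -/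
abbrev Torus (d : ℕ) := Fin d → AddCircle (2 * Real.pi)

/-- The lattice `ℤ^d`. -/
abbrev ZLat (d : ℕ) := Fin d → ℤ

/-- The normalized Haar measure `η` on the torus. -/
def haarT (d : ℕ) : Measure (Torus d) :=
  (ENNReal.ofReal ((2 * Real.pi) ^ d))⁻¹ • volume

/-- The character `p ↦ e^{i⟨p,x⟩}` on the torus. -/
def chr {d : ℕ} (x : ZLat d) (p : Torus d) : ℂ :=
  ∏ j, ((AddCircle.toCircle ((x j) • (p j)) : Circle) : ℂ)

/-- Birman–Schwinger principle, direction (ii).  If `ψ ∈ ℓ²(ℤ^d)` satisfies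
`ψ = B_μ(k,z) ψ` with `z < E_min(k)`, then `f := R̂₀(k,z)|V|^{1/2} ψ` satisfies
`H_μ(k) f = z f`.  Here `W = |V|^{1/2}` (so `V = -W²`) and `R̂₀(k,z) = (H₀(k) - z)⁻¹`. -/
theorem stmt_3 (d : ℕ) (μ z : ℝ) (hμ : 0 < μ)
    (E : Torus d → ℝ) (hE : Continuous E) (Emin : ℝ)
    (hmin : IsLeast (Set.range E) Emin) (hz : z < Emin)
    (H0 V W R0 : lp (fun _ : ZLat d => ℂ) 2 →L[ℂ] lp (fun _ : ZLat d => ℂ) 2)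
    (hWsa : IsSelfAdjoint W) (hV : V = -(W ∘L W))
    (hR0 : R0 ∘L (H0 - (z : ℂ) • 1) = 1) (hR0' : (H0 - (z : ℂ) • 1) ∘L R0 = 1)
    (ψ : lp (fun _ : ZLat d => ℂ) 2)
    (hψ : ψ = ((μ : ℂ) • (W ∘L R0 ∘L W)) ψ) :
    (H0 + (μ : ℂ) • V) ((R0 ∘L W) ψ) = (z : ℂ) • ((R0 ∘L W) ψ) := by
  have key : H0 (R0 (W ψ)) = W ψ + (z : ℂ) • R0 (W ψ) := by
    have := congrArg (fun T => T (W ψ)) hR0'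
    simp only [ContinuousLinearMap.comp_apply, ContinuousLinearMap.sub_apply,
      ContinuousLinearMap.smul_apply, ContinuousLinearMap.one_apply] at this
    rw [sub_eq_iff_eq_add] at this
    simpa [add_comm] using this
  have h2 : (μ : ℂ) • W (W (R0 (W ψ))) = W ψ := by
    conv_rhs => rw [hψ]
    rw [ContinuousLinearMap.smul_apply, ContinuousLinearMap.comp_apply, ContinuousLinearMap.comp_apply, _root_.map_smul]
  simp only [ContinuousLinearMap.add_apply, ContinuousLinearMap.smul_apply, hV,
    ContinuousLinearMap.neg_apply, ContinuousLinearMap.comp_apply, key, smul_neg, h2]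
  abel
end
end

section
/- Birman–Schwinger principle, multiplicity: Let k ∈ T^d, z < E_min(k), μ > 0. The number z is an eigenvalue of H_μ(k) of multiplicity m if and only if 1 is an eigenvalue of B_μ(k,z) of multiplicity m. Equivalently, the eigenspace ker(H_μ(k) - z) and ker(B_μ(k,z) - 1) have the same (finite) dimension. -/
open MeasureTheory Complex Filter
open scoped InnerProductSpace

noncomputable section

set_option maxHeartbeats 1000000

/-- Birman–Schwinger principle, multiplicities.  For `z < E_min(k)`,
the eigenspace `ker(H_μ(k) - z)` and the eigenspace `ker(B_μ(k,z) - 1)` have the same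
dimension; in particular `z` is an eigenvalue of `H_μ(k)` of multiplicity `m` iff `1` is
an eigenvalue of `B_μ(k,z)` of multiplicity `m`.  Here `W = |V|^{1/2}` (so `V = -W²`),
`R̂₀(k,z) = (H₀(k)-z)⁻¹`, and `B_μ(k,z) = μ W R̂₀(k,z) W` is compact. -/
theorem stmt_4 (d : ℕ) (μ z : ℝ) (hμ : 0 < μ)
    (E : Torus d → ℝ) (hE : Continuous E) (Emin : ℝ)
    (hmin : IsLeast (Set.range E) Emin) (hz : z < Emin)
    (H0 V W R0 : lp (fun _ : ZLat d => ℂ) 2 →L[ℂ] lp (fun _ : ZLat d => ℂ) 2)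
    (hWsa : IsSelfAdjoint W) (hV : V = -(W ∘L W))
    (hR0 : R0 ∘L (H0 - (z : ℂ) • 1) = 1) (hR0' : (H0 - (z : ℂ) • 1) ∘L R0 = 1)
    (hcpt : IsCompactOperator ((μ : ℂ) • (W ∘L R0 ∘L W))) :
    Module.rank ℂ (LinearMap.ker (((H0 + (μ : ℂ) • V) - (z : ℂ) • 1 : lp (fun _ : ZLat d => ℂ) 2 →L[ℂ] lp (fun _ : ZLat d => ℂ) 2) : lp (fun _ : ZLat d => ℂ) 2 →ₗ[ℂ] lp (fun _ : ZLat d => ℂ) 2)) =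
      Module.rank ℂ (LinearMap.ker ((((μ : ℂ) • (W ∘L R0 ∘L W)) - 1 : lp (fun _ : ZLat d => ℂ) 2 →L[ℂ] lp (fun _ : ZLat d => ℂ) 2) : lp (fun _ : ZLat d => ℂ) 2 →ₗ[ℂ] lp (fun _ : ZLat d => ℂ) 2)) := by
  classical
  set X := lp (fun _ : ZLat d => ℂ) 2
  set A : X →L[ℂ] X := (H0 + (μ : ℂ) • V) - (z : ℂ) • 1 with hA
  set B : X →L[ℂ] X := ((μ : ℂ) • (W ∘L R0 ∘L W)) - 1 with hB
  have hR0pt : ∀ y : X, R0 (H0 y - (z : ℂ) • y) = y := by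
    intro y
    have := congrArg (fun (T : X →L[ℂ] X) => T y) hR0
    simpa only [ContinuousLinearMap.comp_apply, ContinuousLinearMap.sub_apply,
      ContinuousLinearMap.smul_apply, ContinuousLinearMap.one_apply] using this
  have hR0'pt : ∀ y : X, H0 (R0 y) - (z : ℂ) • R0 y = y := by
    intro y
    have := congrArg (fun (T : X →L[ℂ] X) => T y) hR0'
    simpa only [ContinuousLinearMap.comp_apply, ContinuousLinearMap.sub_apply,
      ContinuousLinearMap.smul_apply, ContinuousLinearMap.one_apply] using this
  have hAmem : ∀ x : X, A x = H0 x - (μ : ℂ) • W (W x) - (z : ℂ) • x := by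
    intro x
    simp only [hA, hV, ContinuousLinearMap.add_apply, ContinuousLinearMap.sub_apply,
      ContinuousLinearMap.smul_apply, ContinuousLinearMap.one_apply,
      ContinuousLinearMap.neg_apply, ContinuousLinearMap.comp_apply, smul_neg]
    module
  have hBmem : ∀ x : X, B x = (μ : ℂ) • W (R0 (W x)) - x := by
    intro x
    simp only [hB, ContinuousLinearMap.sub_apply, ContinuousLinearMap.smul_apply,
      ContinuousLinearMap.one_apply, ContinuousLinearMap.comp_apply]
  have hrec : ∀ x : X, A x = 0 → x = (μ : ℂ) • R0 (W (W x)) := by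
    intro x hx
    have h0 := hAmem x
    rw [hx] at h0
    have h1 : H0 x - (z : ℂ) • x = (μ : ℂ) • W (W x) := by
      linear_combination (norm := module) h0.symm
    calc x = R0 (H0 x - (z : ℂ) • x) := (hR0pt x).symm
    _ = R0 ((μ : ℂ) • W (W x)) := by rw [h1]
    _ = (μ : ℂ) • R0 (W (W x)) := by rw [ContinuousLinearMap.map_smul]
  have hWmap : ∀ x ∈ LinearMap.ker (A : X →ₗ[ℂ] X), W x ∈ LinearMap.ker (B : X →ₗ[ℂ] X) := by
    intro x hx
    rw [LinearMap.mem_ker, ContinuousLinearMap.coe_coe] at hx ⊢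
    rw [hBmem, ← ContinuousLinearMap.map_smul W, ← hrec x hx, sub_self]
  have hfix : ∀ x : X, B x = 0 → (μ : ℂ) • W (R0 (W x)) = x := by
    intro x hx
    have h0 := hBmem x
    rw [hx] at h0
    linear_combination (norm := module) h0.symm
  have hGmap : ∀ x ∈ LinearMap.ker (B : X →ₗ[ℂ] X), ((μ : ℂ) • (R0 ∘L W)) x ∈ LinearMap.ker (A : X →ₗ[ℂ] X) := by
    intro x hx
    rw [LinearMap.mem_ker, ContinuousLinearMap.coe_coe] at hx ⊢
    set φ : X := (μ : ℂ) • R0 (W x) with hφ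
    have hap : ((μ : ℂ) • (R0 ∘L W)) x = φ := by
      simp only [hφ, ContinuousLinearMap.smul_apply, ContinuousLinearMap.comp_apply]
    rw [hap, hAmem]
    have hWφ : W φ = x := by
      rw [hφ, ContinuousLinearMap.map_smul]; exact hfix x hx
    have h2 : H0 φ - (z : ℂ) • φ = (μ : ℂ) • W x := by
      rw [hφ, ContinuousLinearMap.map_smul, smul_comm ((z : ℂ)) ((μ : ℂ)), ← smul_sub,
        hR0'pt]
    rw [hWφ]
    linear_combination (norm := module) h2
  let F : LinearMap.ker (A : X →ₗ[ℂ] X) →ₗ[ℂ] LinearMap.ker (B : X →ₗ[ℂ] X) :=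
    (W : X →ₗ[ℂ] X).restrict hWmap
  let G : LinearMap.ker (B : X →ₗ[ℂ] X) →ₗ[ℂ] LinearMap.ker (A : X →ₗ[ℂ] X) :=
    (((μ : ℂ) • (R0 ∘L W) : X →L[ℂ] X) : X →ₗ[ℂ] X).restrict hGmap
  have hFG : F.comp G = LinearMap.id := by
    refine LinearMap.ext fun ⟨x, hx⟩ => Subtype.ext ?_
    have hx' : B x = 0 := hx
    simp only [LinearMap.comp_apply, LinearMap.id_apply, F, G, LinearMap.restrict_apply,
      ContinuousLinearMap.coe_coe, ContinuousLinearMap.smul_apply,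
      ContinuousLinearMap.comp_apply]
    rw [ContinuousLinearMap.map_smul]
    exact hfix x hx'
  have hGF : G.comp F = LinearMap.id := by
    refine LinearMap.ext fun ⟨x, hx⟩ => Subtype.ext ?_
    have hx' : A x = 0 := hx
    simp only [LinearMap.comp_apply, LinearMap.id_apply, F, G, LinearMap.restrict_apply,
      ContinuousLinearMap.coe_coe, ContinuousLinearMap.smul_apply,
      ContinuousLinearMap.comp_apply]
    exact (hrec x hx').symm
  exact (LinearEquiv.ofLinear F G hFG hGF).rank_eq
end
end
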